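/- In the F^α-scheme, the probability that the n-th observation is a record equals α_n / s_n, where s_n = α_1 + ... + α_n. That is, if X_1, ..., X_n are independent real random variables with X_k having distribution function F^{α_k} for a common continuous distribution function F and positive reals α_k, then P(X_n > max(X_1, ..., X_{n-1})) = α_n / (α_1 + ... + α_n). -/

import Mathlib

open MeasureTheory ProbabilityTheory Filter Set

-- L1: Iio from Iic via continuity
lemma measure_Iio_of_cdf (μ : Measure ℝ) (G : ℝ → ℝ) (hGc : Continuous G) (hGm : Monotone G)
    (h : ∀ x, μ (Iic x) = ENNReal.ofReal (G x)) (x : ℝ) :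
    μ (Iio x) = ENNReal.ofReal (G x) := by
  have hU : Iio x = ⋃ n : ℕ, Iic (x - ((n:ℝ)+1)⁻¹) := by
    ext y
    simp only [mem_Iio, mem_iUnion, mem_Iic]
    constructor
    · intro hy
      obtain ⟨n, hn⟩ := exists_nat_gt (x - y)⁻¹
      refine ⟨n, ?_⟩
      have hxy : 0 < x - y := by linarith
      have h1 : ((n:ℝ)+1)⁻¹ ≤ x - y := by
        rw [inv_le_comm₀ (by positivity) hxy]
        calc (x - y)⁻¹ ≤ n := hn.le
        _ ≤ (n:ℝ)+1 := by linarith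
      linarith
    · rintro ⟨n, hn⟩
      have : (0:ℝ) < ((n:ℝ)+1)⁻¹ := by positivity
      linarith
  have hmono : Monotone fun n : ℕ => Iic (x - ((n:ℝ)+1)⁻¹) := by
    intro a b hab
    apply Iic_subset_Iic.2
    have : ((b:ℝ)+1)⁻¹ ≤ ((a:ℝ)+1)⁻¹ := by
      apply inv_anti₀ (by positivity)
      have : (a:ℝ) ≤ b := Nat.cast_le.mpr hab
      linarith
    linarith
  rw [hU, hmono.directed_le.measure_iUnion]
  simp_rw [h]
  have hlim : Tendsto (fun n : ℕ => ENNReal.ofReal (G (x - ((n:ℝ)+1)⁻¹))) atTop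
      (nhds (ENNReal.ofReal (G x))) := by
    apply (ENNReal.continuous_ofReal.tendsto _).comp
    apply (hGc.tendsto _).comp
    have : Tendsto (fun n : ℕ => ((n:ℝ)+1)⁻¹) atTop (nhds 0) :=
      tendsto_one_div_add_atTop_nhds_zero_nat.congr (by intro n; rw [one_div])
    simpa using (tendsto_const_nhds (x := x)).sub this
  have hmono2 : Monotone fun n : ℕ => ENNReal.ofReal (G (x - ((n:ℝ)+1)⁻¹)) := by
    intro a b hab
    apply ENNReal.ofReal_le_ofReal
    apply hGm
    have := hmono hab
    simpa [Iic_subset_Iic] using this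
  exact tendsto_nhds_unique (tendsto_atTop_iSup hmono2) hlim

lemma measure_F_le (μ : Measure ℝ) (F : ℝ → ℝ) (hFmono : Monotone F) (hFcont : Continuous F)
    (hF0 : Tendsto F atBot (nhds 0)) (hF1 : Tendsto F atTop (nhds 1))
    (γ : ℝ) (hγ : 0 < γ) (hcdf : ∀ x, μ (Iic x) = ENNReal.ofReal (F x ^ γ))
    (t : ℝ) (ht0 : 0 ≤ t) (ht1 : t < 1) :
    μ {x | F x ≤ t} = ENNReal.ofReal (t ^ γ) := by
  set S := {x | F x ≤ t} with hS
  by_cases hne : S.Nonempty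
  · have hbdd : BddAbove S := by
      obtain ⟨b, hb⟩ := (hF1.eventually_const_lt ht1).exists_forall_of_atTop
      refine ⟨b, fun x hx => ?_⟩
      by_contra h
      exact (hb x (le_of_not_ge h)).not_ge hx
    have hclosed : IsClosed S := isClosed_le hFcont continuous_const
    set a := sSup S with ha
    have haS : a ∈ S := hclosed.csSup_mem hne hbdd
    have hSeq : S = Iic a := by
      ext x
      constructor
      · intro hx; exact le_csSup hbdd hx
      · intro hx; exact le_trans (hFmono hx) haS
    have hFa : F a = t := by
      refine le_antisymm haS ?_
      have h2 : ∀ y ∈ Ioi a, t ≤ F y := by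
        intro y hy
        by_contra h
        have : y ∈ S := le_of_not_ge h
        rw [hSeq] at this
        exact absurd hy (by simpa using this)
      have := ge_of_tendsto (hFcont.continuousAt.tendsto.mono_left nhdsWithin_le_nhds :
        Tendsto F (nhdsWithin a (Ioi a)) (nhds (F a)))
        (eventually_nhdsWithin_of_forall h2)
      exact this
    rw [hSeq, hcdf, hFa]
  · rw [not_nonempty_iff_eq_empty] at hne
    rw [hne]
    have ht : t = 0 := by
      by_contra h
      have ht' : 0 < t := lt_of_le_of_ne ht0 (Ne.symm h)
      obtain ⟨x, hx⟩ := (hF0.eventually_lt_const ht').exists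
      exact (eq_empty_iff_forall_notMem.mp hne x) hx.le
    simp [ht, Real.zero_rpow hγ.ne']

lemma map_F_eq (μ : Measure ℝ) [IsProbabilityMeasure μ] (F : ℝ → ℝ)
    (hFmono : Monotone F) (hFcont : Continuous F)
    (hF0 : Tendsto F atBot (nhds 0)) (hF1 : Tendsto F atTop (nhds 1))
    (γ : ℝ) (hγ : 0 < γ) (hcdf : ∀ x, μ (Iic x) = ENNReal.ofReal (F x ^ γ)) :
    μ.map F = (volume.restrict (Ioo (0:ℝ) 1)).map (fun u => u ^ γ⁻¹) := by
  have hFnn : ∀ x, 0 ≤ F x := fun x =>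
    le_of_tendsto hF0 (eventually_atBot.mpr ⟨x, fun y hy => hFmono hy⟩)
  have hFle1 : ∀ x, F x ≤ 1 := fun x =>
    ge_of_tendsto hF1 (eventually_atTop.mpr ⟨x, fun y hy => hFmono hy⟩)
  have hmF : Measurable F := hFcont.measurable
  have hmr : Measurable (fun u : ℝ => u ^ γ⁻¹) := by measurability
  haveI : IsFiniteMeasure ((volume.restrict (Ioo (0:ℝ) 1)).map (fun u => u ^ γ⁻¹)) := by
    constructor
    rw [Measure.map_apply hmr MeasurableSet.univ]
    simp [Real.volume_Ioo]
  apply MeasureTheory.Measure.ext_of_Iic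
  intro s
  rw [Measure.map_apply hmF measurableSet_Iic, Measure.map_apply hmr measurableSet_Iic,
    Measure.restrict_apply (hmr measurableSet_Iic)]
  rcases lt_or_ge s 0 with hs | hs
  · have h1 : F ⁻¹' Iic s = ∅ := by
      ext x; simp only [mem_preimage, mem_Iic, mem_empty_iff_false, iff_false, not_le]
      exact lt_of_lt_of_le hs (hFnn x)
    have h2 : (fun u : ℝ => u ^ γ⁻¹) ⁻¹' Iic s ∩ Ioo 0 1 = ∅ := by
      ext u
      simp only [mem_inter_iff, mem_preimage, mem_Iic, mem_Ioo, mem_empty_iff_false, iff_false,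
        not_and, and_imp]
      intro hu hu0 _
      exact absurd hu (not_le.mpr (lt_of_lt_of_le hs (Real.rpow_pos_of_pos hu0 _).le))
    rw [h1, h2]; simp
  rcases lt_or_ge s 1 with hs1 | hs1
  · have h1 : F ⁻¹' Iic s = {x | F x ≤ s} := rfl
    rw [h1, measure_F_le μ F hFmono hFcont hF0 hF1 γ hγ hcdf s hs hs1]
    have h2 : (fun u : ℝ => u ^ γ⁻¹) ⁻¹' Iic s ∩ Ioo 0 1 = Ioc 0 (s ^ γ) := by
      ext u
      simp only [mem_inter_iff, mem_preimage, mem_Iic, mem_Ioo, mem_Ioc]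
      constructor
      · rintro ⟨h, hu0, hu1⟩
        exact ⟨hu0, (Real.rpow_inv_le_iff_of_pos hu0.le hs hγ).mp h⟩
      · rintro ⟨hu0, hu⟩
        refine ⟨(Real.rpow_inv_le_iff_of_pos hu0.le hs hγ).mpr hu, hu0, ?_⟩
        exact lt_of_le_of_lt hu (Real.rpow_lt_one hs hs1 hγ)
    rw [h2, Real.volume_Ioc]
    rw [sub_zero]
  · have h1 : F ⁻¹' Iic s = univ := by
      ext x; simp only [mem_preimage, mem_Iic, mem_univ, iff_true]
      exact (hFle1 x).trans hs1
    have h2 : (fun u : ℝ => u ^ γ⁻¹) ⁻¹' Iic s ∩ Ioo 0 1 = Ioo 0 1 := by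
      apply inter_eq_right.mpr
      intro u hu
      simp only [mem_preimage, mem_Iic]
      exact (Real.rpow_le_one hu.1.le hu.2.le (by positivity)).trans hs1
    rw [h1, h2]
    simp [Real.volume_Ioo]

lemma lintegral_F_rpow (μ : Measure ℝ) [IsProbabilityMeasure μ] (F : ℝ → ℝ)
    (hFmono : Monotone F) (hFcont : Continuous F)
    (hF0 : Tendsto F atBot (nhds 0)) (hF1 : Tendsto F atTop (nhds 1))
    (γ : ℝ) (hγ : 0 < γ) (hcdf : ∀ x, μ (Iic x) = ENNReal.ofReal (F x ^ γ))
    (β : ℝ) (hβ : 0 ≤ β) :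
    ∫⁻ x, ENNReal.ofReal (F x ^ β) ∂μ = ENNReal.ofReal (γ / (γ + β)) := by
  have hmF : Measurable F := hFcont.measurable
  have hmr : Measurable (fun u : ℝ => u ^ γ⁻¹) := by measurability
  have hg : Measurable (fun t : ℝ => ENNReal.ofReal (t ^ β)) := by measurability
  calc ∫⁻ x, ENNReal.ofReal (F x ^ β) ∂μ
      = ∫⁻ t, ENNReal.ofReal (t ^ β) ∂(μ.map F) := (lintegral_map hg hmF).symm
    _ = ∫⁻ t, ENNReal.ofReal (t ^ β)
          ∂((volume.restrict (Ioo (0:ℝ) 1)).map (fun u => u ^ γ⁻¹)) := by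
        rw [map_F_eq μ F hFmono hFcont hF0 hF1 γ hγ hcdf]
    _ = ∫⁻ u in Ioo (0:ℝ) 1, ENNReal.ofReal ((u ^ γ⁻¹) ^ β) := lintegral_map hg hmr
    _ = ∫⁻ u in Ioo (0:ℝ) 1, ENNReal.ofReal (u ^ (γ⁻¹ * β)) := by
        apply setLIntegral_congr_fun measurableSet_Ioo
        intro u hu
        dsimp only
        rw [← Real.rpow_mul hu.1.le]
    _ = ENNReal.ofReal (γ / (γ + β)) := by
        have hr : 0 ≤ γ⁻¹ * β := mul_nonneg (by positivity) hβ
        have hr1 : (0:ℝ) < γ⁻¹ * β + 1 := by linarith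
        have hcont : Continuous (fun u : ℝ => u ^ (γ⁻¹ * β)) :=
          continuous_iff_continuousAt.mpr fun x =>
            Real.continuousAt_rpow_const x _ (Or.inr hr)
        rw [← ofReal_integral_eq_lintegral_ofReal]
        · congr 1
          have h1 : ∫ u in Ioo (0:ℝ) 1, u ^ (γ⁻¹ * β) = ∫ u in (0:ℝ)..1, u ^ (γ⁻¹ * β) := by
            rw [intervalIntegral.integral_of_le zero_le_one,
              MeasureTheory.integral_Ioc_eq_integral_Ioo]
          rw [h1, integral_rpow (Or.inl (by linarith))]
          rw [Real.one_rpow, Real.zero_rpow hr1.ne', sub_zero]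
          rw [div_eq_div_iff hr1.ne' (by linarith : (0:ℝ) < γ + β).ne']
          field_simp
          ring
        · exact (hcont.continuousOn.integrableOn_Icc).mono_set Ioo_subset_Icc_self
        · filter_upwards [self_mem_ae_restrict measurableSet_Ioo] with u hu
          exact Real.rpow_nonneg hu.1.le _

lemma rpow_finset_sum {c : ℝ} (hc : 0 ≤ c) (s : Finset ℕ) (f : ℕ → ℝ) (hf : ∀ i, 0 < f i) :
    c ^ (∑ i ∈ s, f i) = ∏ i ∈ s, c ^ f i := by
  induction s using Finset.cons_induction with
  | empty => simp
  | cons a s ha ih =>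
    have hs : 0 ≤ ∑ i ∈ s, f i := Finset.sum_nonneg fun i _ => (hf i).le
    rw [Finset.sum_cons, Finset.prod_cons,
      Real.rpow_add' hc (ne_of_gt (by have := hf a; linarith)), ih]

theorem falpha_record_probability
    {Ω : Type*} [MeasurableSpace Ω] (P : Measure Ω) [IsProbabilityMeasure P]
    (F : ℝ → ℝ) (hFmono : Monotone F) (hFcont : Continuous F)
    (hF0 : Tendsto F atBot (nhds 0)) (hF1 : Tendsto F atTop (nhds 1))
    (α : ℕ → ℝ) (hα : ∀ k, 0 < α k)
    (X : ℕ → Ω → ℝ) (hX : ∀ k, Measurable (X k))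
    (hindep : iIndepFun X P)
    (hdist : ∀ k x, (P {ω | X k ω ≤ x}).toReal = F x ^ α k)
    (n : ℕ) :
    (P {ω | ∀ j < n, X j ω < X n ω}).toReal
      = α n / ∑ k ∈ Finset.range (n + 1), α k := by
  have hFnn : ∀ x, 0 ≤ F x := fun x =>
    le_of_tendsto hF0 (eventually_atBot.mpr ⟨x, fun y hy => hFmono hy⟩)
  have hdist' : ∀ k x, P (X k ⁻¹' Iic x) = ENNReal.ofReal (F x ^ α k) := by
    intro k x
    rw [← hdist k x, ENNReal.ofReal_toReal (measure_ne_top P _)]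
    rfl
  rcases Nat.eq_zero_or_pos n with hn | hn
  · subst hn
    have : {ω | ∀ j < 0, X j ω < X 0 ω} = univ := by
      ext ω; simp
    rw [this, measure_univ, ENNReal.toReal_one, Finset.sum_range_one]
    rw [eq_comm, div_eq_one_iff_eq (hα 0).ne']
  · set β := ∑ j ∈ Finset.range n, α j with hβdef
    have hβ : 0 ≤ β := Finset.sum_nonneg fun i _ => (hα i).le
    have hne : (Finset.range n).Nonempty := Finset.nonempty_range_iff.mpr hn.ne'
    set M : Ω → ℝ := fun ω => (Finset.range n).sup' hne (fun j => X j ω) with hMdef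
    have hMmeas : Measurable M := by
      have h := Finset.measurable_sup' hne (fun i (_ : i ∈ Finset.range n) => hX i)
      have : M = (Finset.range n).sup' hne X := by
        funext a; rw [Finset.sup'_apply]
      rwa [this]
    -- event rewrite
    have hevent : {ω | ∀ j < n, X j ω < X n ω}
        = (fun ω => (X n ω, M ω)) ⁻¹' {p : ℝ × ℝ | p.2 < p.1} := by
      ext ω
      simp only [mem_setOf_eq, mem_preimage, hMdef, Finset.sup'_lt_iff, Finset.mem_range]
    -- independence of X n and M
    have hIndep : IndepFun (X n) M P := by
      have h1 := hindep.indepFun_finset {n} (Finset.range n)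
        (by simp [Finset.disjoint_left]) hX
      set φ : (↥({n} : Finset ℕ) → ℝ) → ℝ :=
        fun v => v ⟨n, Finset.mem_singleton_self n⟩ with hφ
      set ψ : (↥(Finset.range n) → ℝ) → ℝ :=
        fun v => (Finset.range n).attach.sup' hne.attach (fun i => v i) with hψ
      have hφm : Measurable φ := measurable_pi_apply _
      have hψm : Measurable ψ := by
        have h := Finset.measurable_sup' hne.attach
          (fun (i : ↥(Finset.range n)) (_ : i ∈ (Finset.range n).attach)
            => (measurable_pi_apply i : Measurable fun v : ↥(Finset.range n) → ℝ => v i))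
        have : ψ = (Finset.range n).attach.sup' hne.attach
            (fun (i : ↥(Finset.range n)) (v : ↥(Finset.range n) → ℝ) => v i) := by
          funext v; rw [Finset.sup'_apply]
        rwa [this]
      have h2 := h1.comp hφm hψm
      have e1 : (φ ∘ fun a (i : ↥({n} : Finset ℕ)) => X i a) = X n := rfl
      have e2 : (ψ ∘ fun a (i : ↥(Finset.range n)) => X i a) = M := by
        funext a
        simp only [Function.comp_apply, hψ, hMdef]
        apply le_antisymm
        · exact Finset.sup'_le _ _ fun i _ => Finset.le_sup' (fun j => X j a) i.2
        · exact Finset.sup'_le _ _ fun j hj =>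
            Finset.le_sup' (fun i : ↥(Finset.range n) => X i a)
              (Finset.mem_attach _ ⟨j, hj⟩)
      rwa [e1, e2] at h2
    -- cdf of M
    have hcdfM : ∀ x, P (M ⁻¹' Iic x) = ENNReal.ofReal (F x ^ β) := by
      intro x
      have hset : M ⁻¹' Iic x = ⋂ j ∈ Finset.range n, X j ⁻¹' Iic x := by
        ext ω
        simp [hMdef, Finset.sup'_le_iff]
      rw [hset, hindep.measure_inter_preimage_eq_mul (Finset.range n)
        (sets := fun _ => Iic x) (fun i _ => measurableSet_Iic)]
      simp_rw [hdist']
      rw [← ENNReal.ofReal_prod_of_nonneg (fun i _ => Real.rpow_nonneg (hFnn x) _),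
        ← rpow_finset_sum (hFnn x) _ _ hα]
    set μn := P.map (X n) with hμn
    set μM := P.map M with hμM
    haveI : IsProbabilityMeasure μn := Measure.isProbabilityMeasure_map (hX n).aemeasurable
    haveI : IsProbabilityMeasure μM := Measure.isProbabilityMeasure_map hMmeas.aemeasurable
    have hcdfn : ∀ x, μn (Iic x) = ENNReal.ofReal (F x ^ α n) := fun x => by
      rw [hμn, Measure.map_apply (hX n) measurableSet_Iic, hdist']
    have hcdfM' : ∀ x, μM (Iic x) = ENNReal.ofReal (F x ^ β) := fun x => by
      rw [hμM, Measure.map_apply hMmeas measurableSet_Iic, hcdfM]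
    have hGc : Continuous (fun x => F x ^ β) := hFcont.rpow_const (fun x => Or.inr hβ)
    have hGm : Monotone (fun x => F x ^ β) := fun x y hxy =>
      Real.rpow_le_rpow (hFnn x) (hFmono hxy) hβ
    have hsetm : MeasurableSet {p : ℝ × ℝ | p.2 < p.1} :=
      measurableSet_lt measurable_snd measurable_fst
    have key : P {ω | ∀ j < n, X j ω < X n ω} = ENNReal.ofReal (α n / (α n + β)) := by
      rw [hevent, ← Measure.map_apply ((hX n).prodMk hMmeas) hsetm,
        (indepFun_iff_map_prod_eq_prod_map_map (hX n).aemeasurable hMmeas.aemeasurable).mp hIndep,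
        Measure.prod_apply hsetm]
      have hsec : ∀ y : ℝ, (Prod.mk y ⁻¹' {p : ℝ × ℝ | p.2 < p.1}) = Iio y := by
        intro y; ext m; simp
      simp_rw [hsec]
      have : ∀ y : ℝ, μM (Iio y) = ENNReal.ofReal (F y ^ β) := fun y =>
        measure_Iio_of_cdf μM _ hGc hGm hcdfM' y
      simp_rw [← hμM, this]
      exact lintegral_F_rpow μn F hFmono hFcont hF0 hF1 (α n) (hα n) hcdfn β hβ
    rw [key, ENNReal.toReal_ofReal (div_nonneg (hα n).le (by linarith [hα n]))]
    rw [Finset.sum_range_succ, ← hβdef, add_comm β (α n)]
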